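/- Let n ≥ 2, a ∈ ℝ, j ∈ ℕ, and fix y ∈ ℝ^{n-1}. Define K_j : {x ∈ ℝⁿ : x_n ≠ 0} → ℝ by K_j(x) = x_n^j |x_n|^{1-a-2j} (|x'-y|² + x_n²)^{-(n-a-2j)/2}, where x = (x', x_n). Then Δ_a K_j(x) = j(j+a−1) K_j(x) for every x with x_n ≠ 0. -/

import Mathlib

/-- Directional derivative: `pd v u x = (fderiv ℝ u x) v`. -/
noncomputable def pd {E F : Type*} [NormedAddCommGroup E] [NormedSpace ℝ E]
    [NormedAddCommGroup F] [NormedSpace ℝ F] (v : E) (u : E → F) (x : E) : F :=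
  fderiv ℝ u x v

noncomputable def Qf (m : ℕ) (y : Fin m → ℝ) (x : (Fin m → ℝ) × ℝ) : ℝ :=
  (∑ i, (x.1 i - y i) ^ 2) + x.2 ^ 2

noncomputable def gf (m : ℕ) (y : Fin m → ℝ) (k : ℕ) (p q : ℝ) (x : (Fin m → ℝ) × ℝ) : ℝ :=
  x.2 ^ k * (x.2 ^ 2) ^ p * (Qf m y x) ^ q

lemma Qf_pos (m : ℕ) (y : Fin m → ℝ) (x : (Fin m → ℝ) × ℝ) (hx : x.2 ≠ 0) :
    0 < Qf m y x := by
  have h1 : 0 < x.2 ^ 2 := by positivity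
  have h2 : 0 ≤ ∑ i, (x.1 i - y i) ^ 2 := Finset.sum_nonneg fun i _ => sq_nonneg _
  unfold Qf; linarith

lemma gf_deriv (m : ℕ) (y : Fin m → ℝ) (k : ℕ) (p q : ℝ) (x : (Fin m → ℝ) × ℝ) (hx : x.2 ≠ 0) :
    DifferentiableAt ℝ (gf m y k p q) x ∧ ∀ v : (Fin m → ℝ) × ℝ,
      pd v (gf m y k p q) x =
        ((k : ℝ) * x.2 ^ (k - 1) * (x.2 ^ 2) ^ p * (Qf m y x) ^ q
          + 2 * p * x.2 ^ k * x.2 * (x.2 ^ 2) ^ (p - 1) * (Qf m y x) ^ q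
          + 2 * q * x.2 ^ k * x.2 * (x.2 ^ 2) ^ p * (Qf m y x) ^ (q - 1)) * v.2
        + 2 * q * x.2 ^ k * (x.2 ^ 2) ^ p * (Qf m y x) ^ (q - 1)
            * (∑ i, (x.1 i - y i) * v.1 i) := by
  have hsnd : HasFDerivAt (fun z : (Fin m → ℝ) × ℝ => z.2)
      (ContinuousLinearMap.snd ℝ (Fin m → ℝ) ℝ) x := hasFDerivAt_snd
  have hpk := (hasDerivAt_pow k x.2).comp_hasFDerivAt x hsnd
  have hp2 := (hasDerivAt_pow 2 x.2).comp_hasFDerivAt x hsnd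
  have hPp := hp2.rpow_const (p := p) (Or.inl (pow_ne_zero 2 hx))
  have hL : ∀ i, HasFDerivAt (fun z : (Fin m → ℝ) × ℝ => z.1 i)
      ((ContinuousLinearMap.proj i).comp (ContinuousLinearMap.fst ℝ (Fin m → ℝ) ℝ)) x :=
    fun i => ((ContinuousLinearMap.proj i).comp
      (ContinuousLinearMap.fst ℝ (Fin m → ℝ) ℝ)).hasFDerivAt
  have hsum := HasFDerivAt.fun_sum (u := Finset.univ)
    (fun i _ => (hasDerivAt_pow 2 (x.1 i - y i)).comp_hasFDerivAt x ((hL i).sub_const (y i)))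
  have hQ : HasFDerivAt (Qf m y) _ x := hsum.add hp2
  have hQq := hQ.rpow_const (p := q) (Or.inl (Qf_pos m y x hx).ne')
  have H : HasFDerivAt (gf m y k p q) _ x := (hpk.mul hPp).mul hQq
  refine ⟨H.differentiableAt, fun v => ?_⟩
  rw [pd, H.fderiv]
  simp only [ContinuousLinearMap.add_apply, ContinuousLinearMap.smul_apply,
    ContinuousLinearMap.coe_comp', ContinuousLinearMap.proj_apply,
    ContinuousLinearMap.coe_fst', ContinuousLinearMap.coe_snd',
    ContinuousLinearMap.coe_sum', Finset.sum_apply, Function.comp_apply,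
    smul_eq_mul, Nat.cast_ofNat, pow_one]
  norm_num
  have hS : (∑ i, 2 * (x.1 i - y i) * v.1 i) = 2 * ∑ i, (x.1 i - y i) * v.1 i := by
    rw [Finset.mul_sum]; exact Finset.sum_congr rfl fun i _ => by ring
  rw [hS]
  ring

lemma gf_pd_vert (m : ℕ) (y : Fin m → ℝ) (k : ℕ) (p q : ℝ) (x : (Fin m → ℝ) × ℝ)
    (hx : x.2 ≠ 0) :
    pd ((0 : Fin m → ℝ), (1 : ℝ)) (gf m y k p q) x =
      (k : ℝ) * x.2 ^ (k - 1) * (x.2 ^ 2) ^ p * (Qf m y x) ^ q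
        + 2 * p * x.2 ^ k * x.2 * (x.2 ^ 2) ^ (p - 1) * (Qf m y x) ^ q
        + 2 * q * x.2 ^ k * x.2 * (x.2 ^ 2) ^ p * (Qf m y x) ^ (q - 1) := by
  rw [(gf_deriv m y k p q x hx).2]
  simp

lemma gf_pd_single (m : ℕ) (y : Fin m → ℝ) (k : ℕ) (p q : ℝ) (x : (Fin m → ℝ) × ℝ)
    (hx : x.2 ≠ 0) (i : Fin m) :
    pd (Pi.single i 1, (0 : ℝ)) (gf m y k p q) x =
      2 * q * (x.1 i - y i) * (x.2 ^ k * (x.2 ^ 2) ^ p * (Qf m y x) ^ (q - 1)) := by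
  rw [(gf_deriv m y k p q x hx).2]
  have hS : (∑ i', (x.1 i' - y i') * (Pi.single i 1 : Fin m → ℝ) i') = x.1 i - y i := by
    simp [Pi.single_apply]
  simp only [hS]
  simp
  ring

lemma pd_add {E : Type*} [NormedAddCommGroup E] [NormedSpace ℝ E] {f g : E → ℝ} {x : E}
    (hf : DifferentiableAt ℝ f x) (hg : DifferentiableAt ℝ g x) (v : E) :
    pd v (fun z => f z + g z) x = pd v f x + pd v g x := by
  simp [pd, fderiv_fun_add hf hg]

lemma pd_cmul {E : Type*} [NormedAddCommGroup E] [NormedSpace ℝ E] {f : E → ℝ} {x : E}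
    (c : ℝ) (hf : DifferentiableAt ℝ f x) (v : E) :
    pd v (fun z => c * f z) x = c * pd v f x := by
  simp [pd, fderiv_const_mul hf]

lemma pd_mul {E : Type*} [NormedAddCommGroup E] [NormedSpace ℝ E] {f g : E → ℝ} {x : E}
    (hf : DifferentiableAt ℝ f x) (hg : DifferentiableAt ℝ g x) (v : E) :
    pd v (fun z => f z * g z) x = f x * pd v g x + g x * pd v f x := by
  simp [pd, fderiv_fun_mul hf hg]

lemma lin_diff (m : ℕ) (y : Fin m → ℝ) (i : Fin m) (x : (Fin m → ℝ) × ℝ) :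
    DifferentiableAt ℝ (fun z : (Fin m → ℝ) × ℝ => z.1 i - y i) x :=
  (((ContinuousLinearMap.proj i).comp
    (ContinuousLinearMap.fst ℝ (Fin m → ℝ) ℝ)).differentiableAt).sub_const _

lemma lin_pd (m : ℕ) (y : Fin m → ℝ) (i : Fin m) (x : (Fin m → ℝ) × ℝ)
    (v : (Fin m → ℝ) × ℝ) :
    pd v (fun z : (Fin m → ℝ) × ℝ => z.1 i - y i) x = v.1 i := by
  have hL := (((ContinuousLinearMap.proj i).comp
    (ContinuousLinearMap.fst ℝ (Fin m → ℝ) ℝ)).hasFDerivAt (x := x)).sub_const (y i)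
  have hL' : HasFDerivAt (fun z : (Fin m → ℝ) × ℝ => z.1 i - y i) _ x := hL
  rw [pd, hL'.fderiv]
  simp

lemma pd_congr {E : Type*} [NormedAddCommGroup E] [NormedSpace ℝ E] {f g : E → ℝ} {x : E}
    (h : f =ᶠ[nhds x] g) (v : E) : pd v f x = pd v g x := by
  unfold pd; rw [h.fderiv_eq]

/-- The operator `Δ_a u = x_n² Δu + a x_n ∂u/∂x_n` on `ℝⁿ = ℝ^m × ℝ` (real valued). -/
noncomputable def deltaA (m : ℕ) (a : ℝ) (u : (Fin m → ℝ) × ℝ → ℝ)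
    (x : (Fin m → ℝ) × ℝ) : ℝ :=
  x.2 ^ 2 *
      ((∑ j, pd (Pi.single j 1, (0 : ℝ)) (pd (Pi.single j 1, (0 : ℝ)) u) x)
        + pd ((0 : Fin m → ℝ), (1 : ℝ)) (pd ((0 : Fin m → ℝ), (1 : ℝ)) u) x)
    + a * x.2 * pd ((0 : Fin m → ℝ), (1 : ℝ)) u x

/-- The kernel `K_j(x) = x_n^j |x_n|^{1-a-2j} (|x'-y|² + x_n²)^{-(n-a-2j)/2}`. -/
noncomputable def kerKj (n : ℕ) (a : ℝ) (j : ℕ) (y : Fin (n - 1) → ℝ)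
    (x : (Fin (n - 1) → ℝ) × ℝ) : ℝ :=
  x.2 ^ j * |x.2| ^ (1 - a - 2 * (j : ℝ)) *
    ((∑ i, (x.1 i - y i) ^ 2) + x.2 ^ 2) ^ (-(((n : ℝ) - a - 2 * (j : ℝ)) / 2))

set_option maxHeartbeats 2000000 in
/-- For every `x` with `x_n ≠ 0`, `Δ_a K_j(x) = j(j+a−1) K_j(x)`. -/
theorem statement5 (n : ℕ) (hn : 2 ≤ n) (a : ℝ) (j : ℕ) (y : Fin (n - 1) → ℝ)
    (x : (Fin (n - 1) → ℝ) × ℝ) (hx : x.2 ≠ 0) :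
    deltaA (n - 1) a (kerKj n a j y) x = (j : ℝ) * ((j : ℝ) + a - 1) * kerKj n a j y x := by
  set p0 : ℝ := (1 - a - 2 * (j : ℝ)) / 2 with hp0
  set q0 : ℝ := -(((n : ℝ) - a - 2 * (j : ℝ)) / 2) with hq0
  have hker : kerKj n a j y = gf (n - 1) y j p0 q0 := by
    funext z
    unfold kerKj gf Qf
    congr 1
    congr 1
    rw [← sq_abs z.2, ← Real.rpow_natCast |z.2| 2, ← Real.rpow_mul (abs_nonneg z.2)]
    congr 1
    ring
  rw [hker]
  have hev : ∀ᶠ z in nhds x, z.2 ≠ 0 :=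
    (((isOpen_ne : IsOpen {t : ℝ | t ≠ 0})).preimage continuous_snd).mem_nhds hx
  -- vertical second derivative
  have hrep_en : (fun z => pd ((0 : Fin (n-1) → ℝ), (1:ℝ)) (gf (n-1) y j p0 q0) z) =ᶠ[nhds x]
      (fun z => (j : ℝ) * gf (n-1) y (j-1) p0 q0 z + (2*p0) * gf (n-1) y (j+1) (p0-1) q0 z
        + (2*q0) * gf (n-1) y (j+1) p0 (q0-1) z) := by
    filter_upwards [hev] with z hz
    rw [gf_pd_vert (n-1) y j p0 q0 z hz]
    simp only [gf, pow_succ]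
    ring
  have hBB : pd ((0 : Fin (n-1) → ℝ), (1:ℝ))
      (pd ((0 : Fin (n-1) → ℝ), (1:ℝ)) (gf (n-1) y j p0 q0)) x
      = (j : ℝ) * pd ((0 : Fin (n-1) → ℝ), (1:ℝ)) (gf (n-1) y (j-1) p0 q0) x
        + (2*p0) * pd ((0 : Fin (n-1) → ℝ), (1:ℝ)) (gf (n-1) y (j+1) (p0-1) q0) x
        + (2*q0) * pd ((0 : Fin (n-1) → ℝ), (1:ℝ)) (gf (n-1) y (j+1) p0 (q0-1)) x := by
    have e1 := (gf_deriv (n-1) y (j-1) p0 q0 x hx).1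
    have e2 := (gf_deriv (n-1) y (j+1) (p0-1) q0 x hx).1
    have e3 := (gf_deriv (n-1) y (j+1) p0 (q0-1) x hx).1
    have : pd ((0 : Fin (n-1) → ℝ), (1:ℝ))
        (pd ((0 : Fin (n-1) → ℝ), (1:ℝ)) (gf (n-1) y j p0 q0)) x
        = pd ((0 : Fin (n-1) → ℝ), (1:ℝ))
          (fun z => (j : ℝ) * gf (n-1) y (j-1) p0 q0 z + (2*p0) * gf (n-1) y (j+1) (p0-1) q0 z
            + (2*q0) * gf (n-1) y (j+1) p0 (q0-1) z) x :=
      pd_congr hrep_en _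
    rw [this, pd_add (((e1.const_mul _).fun_add (e2.const_mul _))) (e3.const_mul _),
      pd_add (e1.const_mul _) (e2.const_mul _), pd_cmul _ e1, pd_cmul _ e2, pd_cmul _ e3]
  -- horizontal second derivatives
  have hCC : ∀ i : Fin (n-1), pd (Pi.single i 1, (0:ℝ))
      (pd (Pi.single i 1, (0:ℝ)) (gf (n-1) y j p0 q0)) x
      = 2*q0 * (gf (n-1) y j p0 (q0-1) x
          + (x.1 i - y i) * (2*(q0-1)*(x.1 i - y i)
            * (x.2 ^ j * (x.2^2) ^ p0 * (Qf (n-1) y x) ^ (q0-1-1)))) := by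
    intro i
    have hrep : (fun z => pd (Pi.single i 1, (0:ℝ)) (gf (n-1) y j p0 q0) z) =ᶠ[nhds x]
        (fun z => (2*q0) * ((z.1 i - y i) * gf (n-1) y j p0 (q0-1) z)) := by
      filter_upwards [hev] with z hz
      rw [gf_pd_single (n-1) y j p0 q0 z hz i]
      simp only [gf]
      ring
    have hstep : pd (Pi.single i 1, (0:ℝ))
        (pd (Pi.single i 1, (0:ℝ)) (gf (n-1) y j p0 q0)) x
        = pd (Pi.single i 1, (0:ℝ))
          (fun z => (2*q0) * ((z.1 i - y i) * gf (n-1) y j p0 (q0-1) z)) x :=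
      pd_congr hrep _
    have dg := (gf_deriv (n-1) y j p0 (q0-1) x hx).1
    rw [hstep, pd_cmul _ ((lin_diff (n-1) y i x).fun_mul dg),
      pd_mul (lin_diff (n-1) y i x) dg, lin_pd, gf_pd_single (n-1) y j p0 (q0-1) x hx i]
    simp only [gf, Pi.single_eq_same]
    ring
  unfold deltaA
  rw [hBB, gf_pd_vert (n-1) y j p0 q0 x hx,
    gf_pd_vert (n-1) y (j-1) p0 q0 x hx, gf_pd_vert (n-1) y (j+1) (p0-1) q0 x hx,
    gf_pd_vert (n-1) y (j+1) p0 (q0-1) x hx]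
  rw [Finset.sum_congr rfl (fun i _ => hCC i)]
  rw [← Finset.mul_sum, Finset.sum_add_distrib, Finset.sum_const, Finset.card_univ,
    Fintype.card_fin]
  have h2 : (x.2 ^ 2 : ℝ) ≠ 0 := pow_ne_zero 2 hx
  have hQne : Qf (n-1) y x ≠ 0 := (Qf_pos _ _ _ hx).ne'
  have hsum : ∑ i, (x.1 i - y i) * (2*(q0-1)*(x.1 i - y i)
      * (x.2^j * (x.2^2)^p0 * Qf (n-1) y x ^ (q0-1-1)))
      = (2*(q0-1) * (x.2^j * (x.2^2)^p0 * Qf (n-1) y x ^ (q0-1-1)))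
        * ∑ i, (x.1 i - y i)^2 := by
    rw [Finset.mul_sum]; exact Finset.sum_congr rfl fun i _ => by ring
  rw [hsum]
  simp only [gf, nsmul_eq_mul]
  rw [Nat.cast_sub (by omega : 1 ≤ n), Nat.cast_one]
  have rA1 : (x.2^2:ℝ)^(p0-1) * x.2^2 = (x.2^2)^p0 := by
    rw [Real.rpow_sub_one h2]; exact div_mul_cancel₀ _ h2
  have rA2 : (x.2^2:ℝ)^(p0-1-1) * x.2^2 = (x.2^2)^(p0-1) := by
    rw [Real.rpow_sub_one h2]; exact div_mul_cancel₀ _ h2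
  have rB1 : (Qf (n-1) y x)^(q0-1) * (Qf (n-1) y x) = (Qf (n-1) y x)^q0 := by
    rw [Real.rpow_sub_one hQne]; exact div_mul_cancel₀ _ hQne
  have rB2 : (Qf (n-1) y x)^(q0-1-1) * (Qf (n-1) y x) = (Qf (n-1) y x)^(q0-1) := by
    rw [Real.rpow_sub_one hQne]; exact div_mul_cancel₀ _ hQne
  rw [hp0] at rA1 rA2
  rw [hq0] at rB1 rB2
  rw [hp0, hq0]
  rw [← rA1, ← rA2, ← rB1, ← rB2]
  simp only [Qf]
  rcases j with _ | _ | j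
  · norm_num
    ring
  · norm_num
    ring
  · simp only [Nat.add_sub_cancel]
    push_cast
    ring
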